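/- Let α be real with α > −1, γ > 0 arbitrary real. For |t| < 1/2 and x real, Σ_{n=0}^∞ [γ/(n+γ)] L_n^{(α)}(x) t^n = (1−t)^{−γ} Σ_{m,j=0}^∞ [(γ)_{m+j} (γ−α)_m / ((γ+1)_{m+j} m! j!)] (t/(t−1))^m (xt/(t−1))^j, where L_n^{(α)}(x) = Σ_{k=0}^n (−1)^k (α+1)_n/((α+1)_k (n−k)! k!) x^k are the classical Laguerre polynomials. -/

import Mathlib

/-- Pochhammer symbol (rising factorial) of a real number. -/
noncomputable def poch (a : ℝ) (k : ℕ) : ℝ := ∏ i ∈ Finset.range k, (a + i)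

/-- Classical Laguerre polynomials \(L_n^{(\alpha)}(x)\). -/
noncomputable def laguerre (α x : ℝ) (n : ℕ) : ℝ :=
  ∑ k ∈ Finset.range (n + 1),
    (-1) ^ k * poch (α + 1) n /
      (poch (α + 1) k * (Nat.factorial (n - k)) * (Nat.factorial k)) * x ^ k


@[simp] lemma poch_zero (a : ℝ) : poch a 0 = 1 := by simp [poch]

lemma poch_succ (a : ℝ) (k : ℕ) : poch a (k + 1) = poch a k * (a + k) := by
  simp [poch, Finset.prod_range_succ]

lemma poch_succ' (a : ℝ) (k : ℕ) : poch a (k + 1) = a * poch (a + 1) k := by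
  rw [poch, poch, Finset.prod_range_succ']
  simp only [Nat.cast_zero, add_zero, mul_comm]
  congr 1
  apply Finset.prod_congr rfl
  intro i _
  push_cast
  ring

lemma poch_one (a : ℝ) : poch a 1 = a := by simp [poch]

lemma poch_mul_add (a : ℝ) (k : ℕ) : poch a k * (a + k) = a * poch (a + 1) k := by
  rw [← poch_succ, poch_succ']

lemma poch_add (a : ℝ) (j r : ℕ) : poch a (j + r) = poch a j * poch (a + j) r := by
  rw [poch, poch, poch, Finset.prod_range_add]
  congr 1
  apply Finset.prod_congr rfl
  intro i _
  push_cast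
  ring

lemma poch_pos {a : ℝ} (ha : 0 < a) (k : ℕ) : 0 < poch a k := by
  apply Finset.prod_pos
  intro i _
  positivity

lemma poch_nonneg {a : ℝ} (ha : 0 ≤ a) (k : ℕ) : 0 ≤ poch a k := by
  apply Finset.prod_nonneg
  intro i _
  positivity

lemma abs_poch_le {a c : ℝ} (h : |a| ≤ c) (k : ℕ) : |poch a k| ≤ poch c k := by
  rw [poch, poch, Finset.abs_prod]
  apply Finset.prod_le_prod (fun i _ => abs_nonneg _)
  intro i _
  have h1 : |a + (i:ℝ)| ≤ |a| + |(i:ℝ)| := abs_add_le _ _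
  have h2 : |(i:ℝ)| = (i:ℝ) := abs_of_nonneg (by positivity)
  rw [h2] at h1
  linarith

lemma poch_le_poch {a b : ℝ} (ha : 0 ≤ a) (hab : a ≤ b) (k : ℕ) : poch a k ≤ poch b k := by
  apply Finset.prod_le_prod
  · intro i _; positivity
  · intro i _; linarith

/-- Key combinatorial identity (a Vandermonde-type summation). -/
lemma keyid (a b : ℝ) : ∀ r : ℕ, ∑ m ∈ Finset.range (r + 1),
    (-1 : ℝ) ^ m * (r.choose m) * poch a m * poch (b + m) (r - m) = poch (b - a) r := by
  intro r
  induction r generalizing a b with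
  | zero => simp
  | succ r ih =>
    have hP : ∑ m ∈ Finset.range (r + 1),
        (-1 : ℝ) ^ m * (r.choose m) * poch a m * poch (b + m) (r + 1 - m)
        = (b + r) * ∑ m ∈ Finset.range (r + 1),
          (-1 : ℝ) ^ m * (r.choose m) * poch a m * poch (b + m) (r - m) := by
      rw [Finset.mul_sum]
      apply Finset.sum_congr rfl
      intro m hm
      rw [Finset.mem_range] at hm
      have hm' : m ≤ r := Nat.lt_succ_iff.mp hm
      have e1 : r + 1 - m = (r - m) + 1 := by omega
      rw [e1, poch_succ]
      have e2 : b + m + ((r - m : ℕ) : ℝ) = b + r := by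
        have : ((r - m : ℕ) : ℝ) = (r : ℝ) - m := by
          rw [Nat.cast_sub hm']
        rw [this]; ring
      rw [e2]; ring
    have hQ : ∑ m ∈ Finset.range (r + 1),
        (-1 : ℝ) ^ (m+1) * (r.choose m) * poch a (m+1) * poch (b + (m+1:ℕ)) (r - m)
        = - (a * ∑ m ∈ Finset.range (r + 1),
          (-1 : ℝ) ^ m * (r.choose m) * poch (a+1) m * poch ((b+1) + m) (r - m)) := by
      rw [Finset.mul_sum, ← Finset.sum_neg_distrib]
      apply Finset.sum_congr rfl
      intro m hm
      rw [poch_succ']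
      have e3 : b + ((m+1:ℕ) : ℝ) = (b+1) + m := by push_cast; ring
      rw [e3, pow_succ]
      ring
    -- split the (r+2)-sum
    rw [Finset.sum_range_succ']
    have pascal : ∀ m ∈ Finset.range (r + 1),
        (-1 : ℝ) ^ (m+1) * ((r+1).choose (m+1)) * poch a (m+1) * poch (b + (m+1:ℕ)) (r + 1 - (m+1))
        = (-1 : ℝ) ^ (m+1) * (r.choose (m+1)) * poch a (m+1) * poch (b + (m+1:ℕ)) (r - m)
          + (-1 : ℝ) ^ (m+1) * (r.choose m) * poch a (m+1) * poch (b + (m+1:ℕ)) (r - m) := by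
      intro m _
      have e4 : r + 1 - (m+1) = r - m := by omega
      rw [e4, Nat.choose_succ_succ]
      push_cast
      ring
    rw [Finset.sum_congr rfl pascal, Finset.sum_add_distrib]
    -- identify first part + g0 with P
    have hfirst : (∑ m ∈ Finset.range (r + 1),
          (-1 : ℝ) ^ (m+1) * (r.choose (m+1)) * poch a (m+1) * poch (b + (m+1:ℕ)) (r - m))
        + (-1 : ℝ) ^ 0 * (((r+1).choose 0 : ℕ) : ℝ) * poch a 0 * poch (b + (0:ℕ)) (r + 1 - 0)
        = ∑ m ∈ Finset.range (r + 1),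
          (-1 : ℝ) ^ m * (r.choose m) * poch a m * poch (b + m) (r + 1 - m) := by
      conv_rhs => rw [Finset.sum_range_succ'
        (fun m => (-1 : ℝ) ^ m * (r.choose m) * poch a m * poch (b + m) (r + 1 - m)) r]
      congr 1
      · rw [Finset.sum_range_succ]
        have hz : ((r.choose (r+1) : ℕ) : ℝ) = 0 := by
          rw [Nat.choose_succ_self]; norm_num
        rw [hz]
        simp only [mul_zero, zero_mul, add_zero]
        apply Finset.sum_congr rfl
        intro m hm
        rw [Finset.mem_range] at hm
        have e4 : r + 1 - (m+1) = r - m := by omega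
        rw [e4]
      · norm_num
    have ih2 := ih (a+1) (b+1)
    rw [show b + 1 - (a + 1) = b - a by ring] at ih2
    linear_combination hfirst + hP + hQ + (b + (r:ℝ)) * ih a b - a * ih2 - poch_succ (b-a) r

lemma poch_le_poly {c : ℝ} (b : ℕ) (hc : 0 ≤ c) (hcb : c ≤ b) :
    ∀ m : ℕ, poch c m ≤ m.factorial * ((m : ℝ) + 1) ^ b := by
  intro m
  induction m with
  | zero => simp
  | succ m ih =>
    rw [poch_succ]
    have hcm : 0 ≤ c + m := by positivity
    have h1 : poch c m * (c + m) ≤ (m.factorial * ((m : ℝ) + 1) ^ b) * (c + m) :=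
      mul_le_mul_of_nonneg_right ih hcm
    refine h1.trans ?_
    -- key: (m+1)^b * (c+m) ≤ (m+1) * (m+2)^b
    set u : ℝ := (m : ℝ) + 1 with hu
    have hu0 : (0 : ℝ) < u := by positivity
    have hber : 1 + (b : ℝ) * (1 / u) ≤ (1 + 1 / u) ^ b := by
      apply one_add_mul_le_pow
      have : (0:ℝ) < 1/u := by positivity
      linarith
    have hpow : (1 + 1 / u) ^ b * u ^ b = (u + 1) ^ b := by
      rw [← mul_pow]
      congr 1
      field_simp
    have h2 : (1 + (b:ℝ) * (1 / u)) * u ^ b ≤ (u + 1) ^ b := by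
      rw [← hpow]
      exact mul_le_mul_of_nonneg_right hber (by positivity)
    have h3 : (u + (b:ℝ)) * u ^ b ≤ u * (u + 1) ^ b := by
      have e : (u + (b:ℝ)) * u ^ b = u * ((1 + (b:ℝ) * (1 / u)) * u ^ b) := by
        field_simp
      rw [e]
      exact mul_le_mul_of_nonneg_left h2 hu0.le
    have h4 : u ^ b * (c + m) ≤ (u + b) * u ^ b := by
      have : c + (m:ℝ) ≤ u + b := by rw [hu]; linarith
      nlinarith [pow_nonneg hu0.le b]
    have hfac : ((m+1 : ℕ).factorial : ℝ) = (m.factorial : ℝ) * u := by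
      rw [Nat.factorial_succ]; push_cast [hu]; ring
    have hm2 : ((m + 1 : ℕ) : ℝ) + 1 = u + 1 := by push_cast [hu]; ring
    rw [hfac, hm2]
    have hfm : (0:ℝ) ≤ m.factorial := Nat.cast_nonneg _
    calc m.factorial * u ^ b * (c + m) ≤ m.factorial * ((u + b) * u ^ b) := by
          rw [mul_assoc]
          apply mul_le_mul_of_nonneg_left _ hfm
          exact h4.trans (le_refl _)
      _ ≤ m.factorial * (u * (u+1)^b) := mul_le_mul_of_nonneg_left h3 hfm
      _ = m.factorial * u * (u + 1) ^ b := by ring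

lemma summable_poly_geom (b : ℕ) {q : ℝ} (h0 : 0 ≤ q) (h1 : q < 1) :
    Summable (fun n : ℕ => ((n : ℝ) + 1) ^ b * q ^ n) := by
  rcases eq_or_lt_of_le h0 with h | hq
  · apply summable_of_ne_finset_zero (s := {0})
    intro n hn
    simp only [Finset.mem_singleton] at hn
    rw [← h, zero_pow hn, mul_zero]
  · have hf : Summable (fun n : ℕ => ((n : ℝ)) ^ b * q ^ n) := by
      have : ‖q‖ < 1 := by rw [Real.norm_eq_abs, abs_of_pos hq]; exact h1
      exact summable_pow_mul_geometric_of_norm_lt_one b this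
    have hf1 : Summable (fun n : ℕ => (((n+1 : ℕ)) : ℝ) ^ b * q ^ (n+1)) :=
      (summable_nat_add_iff 1).mpr hf
    have := hf1.mul_right q⁻¹
    apply this.congr
    intro n
    push_cast
    rw [pow_succ]
    field_simp

section Binom

open Set

lemma abs_poch_div_fact_le (a : ℝ) (n : ℕ) :
    |poch a n / n.factorial| ≤ ((n:ℝ)+1) ^ (Nat.ceil |a|) := by
  have h1 : |poch a n| ≤ poch |a| n := abs_poch_le (le_refl _) n
  have h2 : poch |a| n ≤ n.factorial * ((n:ℝ)+1) ^ (Nat.ceil |a|) :=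
    poch_le_poly _ (abs_nonneg a) (Nat.le_ceil _) n
  have hfac : (0:ℝ) < n.factorial := by positivity
  rw [abs_div, abs_of_pos hfac, div_le_iff₀ hfac]
  calc |poch a n| ≤ n.factorial * ((n:ℝ)+1) ^ (Nat.ceil |a|) := h1.trans h2
    _ = ((n:ℝ)+1) ^ (Nat.ceil |a|) * n.factorial := by ring

lemma summable_binom (a : ℝ) {y : ℝ} (hy : |y| < 1) :
    Summable (fun n : ℕ => poch a n / n.factorial * y ^ n) := by
  apply Summable.of_norm_bounded (summable_poly_geom (Nat.ceil |a|) (abs_nonneg y) hy)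
  intro n
  rw [Real.norm_eq_abs, abs_mul, abs_pow]
  exact mul_le_mul_of_nonneg_right (abs_poch_div_fact_le a n) (by positivity)

/-- Binomial series. -/
lemma binom (a : ℝ) {y : ℝ} (hy : |y| < 1) :
    HasSum (fun n : ℕ => poch a n / n.factorial * y ^ n) ((1 - y) ^ (-a) : ℝ) := by
  set b := Nat.ceil |a| with hb
  set c : ℕ → ℝ := fun n => poch a n / n.factorial with hc
  set f : ℝ → ℝ := fun z => ∑' n, c n * z ^ n with hf
  set r : ℝ := (1 + |y|) / 2 with hr
  have hr0 : 0 < r := by positivity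
  have hyr : |y| < r := by rw [hr]; linarith
  have hr1 : r < 1 := by rw [hr]; linarith [abs_nonneg y]
  set s : Set ℝ := Ioo (-r) r with hs
  have hys : y ∈ s := by
    constructor
    · linarith [neg_abs_le y, abs_nonneg y]
    · linarith [le_abs_self y]
  have h0s : (0:ℝ) ∈ s := by constructor <;> simp [hr0]
  set u : ℕ → ℝ := fun n => (n:ℝ) * ((n:ℝ)+1) ^ b * r ^ (n-1) with hu
  have husum : Summable u := by
    apply (summable_nat_add_iff 1).mp
    have hbig : Summable (fun n : ℕ => (2:ℝ)^(b+1) * (((n:ℝ)+1) ^ (b+1) * r ^ n)) :=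
      (summable_poly_geom (b+1) hr0.le hr1).mul_left _
    apply Summable.of_nonneg_of_le _ _ hbig
    · intro n
      simp only [hu]
      positivity
    · intro n
      simp only [hu]
      push_cast
      have e2 : ((n:ℝ)+1+1) ≤ 2 * ((n:ℝ)+1) := by
        have : (0:ℝ) ≤ (n:ℝ) := Nat.cast_nonneg n
        linarith
      calc ((n:ℝ)+1) * ((n:ℝ)+1+1) ^ b * r ^ n
          ≤ (2 * ((n:ℝ)+1)) * (2*((n:ℝ)+1)) ^ b * r ^ n := by
            apply mul_le_mul_of_nonneg_right _ (by positivity)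
            apply mul_le_mul (by nlinarith [Nat.cast_nonneg (α := ℝ) n]) _ (by positivity) (by positivity)
            exact pow_le_pow_left₀ (by positivity) e2 b
        _ = (2:ℝ)^(b+1) * (((n:ℝ)+1) ^ (b+1) * r ^ n) := by
            rw [mul_pow]
            ring
  have hcbound : ∀ n : ℕ, |c n| ≤ ((n:ℝ)+1)^b := fun n => abs_poch_div_fact_le a n
  have hdbound : ∀ (n : ℕ) (w : ℝ), |w| ≤ r → |c n * ((n:ℝ) * w ^ (n-1))| ≤ u n := by
    intro n w hw
    rw [abs_mul, abs_mul, abs_pow, abs_of_nonneg (Nat.cast_nonneg (α := ℝ) n)]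
    have h2 : |w| ^ (n-1) ≤ r ^ (n-1) := pow_le_pow_left₀ (abs_nonneg w) hw _
    calc |c n| * ((n:ℝ) * |w| ^ (n-1)) ≤ ((n:ℝ)+1)^b * ((n:ℝ) * r ^ (n-1)) := by
          apply mul_le_mul (hcbound n) _ (by positivity) (by positivity)
          exact mul_le_mul_of_nonneg_left h2 (Nat.cast_nonneg n)
      _ = u n := by rw [hu]; ring
  have hderiv : ∀ z ∈ s, HasDerivAt f (∑' n, c n * ((n:ℝ) * z ^ (n-1))) z := by
    intro z hz
    apply hasDerivAt_tsum_of_isPreconnected husum isOpen_Ioo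
      (convex_Ioo (-r) r).isPreconnected
      (fun n w _ => (hasDerivAt_pow n w).const_mul (c n)) _ h0s _ hz
    · intro n w hw
      rw [Real.norm_eq_abs]
      exact hdbound n w (by rw [abs_le]; exact ⟨hw.1.le, hw.2.le⟩)
    · apply summable_of_ne_finset_zero (s := ({0} : Finset ℕ))
      intro n hn
      simp only [Finset.mem_singleton] at hn
      rw [zero_pow hn, mul_zero]
  have hODE : ∀ z ∈ s, (∑' n, c n * ((n:ℝ) * z ^ (n-1))) * (1 - z) = a * f z := by
    intro z hz
    have hzr : |z| < r := by rw [abs_lt]; exact ⟨hz.1, hz.2⟩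
    have hz1 : |z| < 1 := hzr.trans hr1
    have hsumf : HasSum (fun n => c n * z ^ n) (f z) := (summable_binom a hz1).hasSum
    have hsumd : Summable (fun n => c n * ((n:ℝ) * z ^ (n-1))) := by
      apply Summable.of_norm_bounded husum
      intro n
      rw [Real.norm_eq_abs]
      exact hdbound n z hzr.le
    set L : ℝ := ∑' n, c n * ((n:ℝ) * z ^ (n-1)) with hL
    have hsumL : HasSum (fun n => c n * ((n:ℝ) * z ^ (n-1))) L := hsumd.hasSum
    have hshift : HasSum (fun n : ℕ => c (n+1) * (((n:ℝ)+1) * z ^ n)) L := by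
      have h1 := (hasSum_nat_add_iff' (f := fun n : ℕ => c n * ((n:ℝ) * z ^ (n-1))) 1).mpr hsumL
      simp only [Finset.range_one, Finset.sum_singleton, Nat.cast_zero, zero_mul,
        mul_zero, sub_zero] at h1
      have e : (fun n : ℕ => c (n+1) * ((((n+1):ℕ):ℝ) * z ^ ((n+1)-1)))
          = (fun n : ℕ => c (n+1) * (((n:ℝ)+1) * z ^ n)) := by
        funext n
        push_cast
        simp only [Nat.add_sub_cancel]
      rwa [e] at h1
    have hA : HasSum (fun n : ℕ => (a + (n:ℝ)) * (c n * z ^ n)) L := by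
      have e : (fun n : ℕ => c (n+1) * (((n:ℝ)+1) * z ^ n))
          = (fun n : ℕ => (a + (n:ℝ)) * (c n * z ^ n)) := by
        funext n
        rw [hc]
        simp only
        rw [poch_succ]
        have hfacs : ((n+1 : ℕ).factorial : ℝ) = ((n:ℝ)+1) * n.factorial := by
          rw [Nat.factorial_succ]; push_cast; ring
        rw [hfacs]
        have hf0 : ((n.factorial : ℝ)) ≠ 0 := by positivity
        have hn1 : ((n:ℝ)+1) ≠ 0 := by positivity
        field_simp
      rwa [e] at hshift
    have hB : HasSum (fun n : ℕ => (n:ℝ) * (c n * z ^ n)) (L * z) := by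
      have h1 := hsumL.mul_right z
      have e : (fun n : ℕ => c n * ((n:ℝ) * z ^ (n-1)) * z)
          = (fun n : ℕ => (n:ℝ) * (c n * z ^ n)) := by
        funext n
        cases n with
        | zero => simp
        | succ m =>
          simp only [Nat.add_sub_cancel]
          push_cast
          rw [pow_succ]
          ring
      rwa [e] at h1
    have hC : HasSum (fun n : ℕ => a * (c n * z ^ n)) (L - L * z) := by
      have h1 := hA.sub hB
      have e : (fun n : ℕ => (a + (n:ℝ)) * (c n * z ^ n) - (n:ℝ) * (c n * z ^ n))
          = (fun n : ℕ => a * (c n * z ^ n)) := by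
        funext n; ring
      rwa [e] at h1
    have hD : HasSum (fun n : ℕ => a * (c n * z ^ n)) (a * f z) := hsumf.mul_left a
    have := hC.unique hD
    linarith [this]
  set F : ℝ → ℝ := fun z => (1-z)^a * f z with hF
  have hFd : ∀ z ∈ s, HasDerivAt F 0 z := by
    intro z hz
    have h1z : 0 < 1 - z := by
      have h2 := hz.2
      have : z < 1 := h2.trans hr1
      linarith
    have hbase : HasDerivAt (fun w : ℝ => 1 - w) (-1) z := by
      simpa using (hasDerivAt_id z).const_sub 1
    have hrpow : HasDerivAt (fun w : ℝ => (1-w)^a) ((-1) * a * (1-z)^(a-1)) z :=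
      hbase.rpow_const (Or.inl h1z.ne')
    have hprod := hrpow.mul (hderiv z hz)
    have heq : (-1) * a * (1-z)^(a-1) * f z
        + (1-z)^a * (∑' n, c n * ((n:ℝ) * z ^ (n-1))) = 0 := by
      have hODEz := hODE z hz
      have e1 : (1-z)^(a-1) = (1-z)^a / (1-z) := by
        rw [Real.rpow_sub h1z, Real.rpow_one]
      rw [e1]
      have hne : (1-z) ≠ 0 := h1z.ne'
      set L := ∑' n, c n * ((n:ℝ) * z ^ (n-1)) with hL
      field_simp
      linear_combination ((1-z):ℝ)^a * hODEz
    rw [heq] at hprod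
    exact hprod
  have hconst : F y = F 0 := by
    apply Convex.is_const_of_fderivWithin_eq_zero (𝕜 := ℝ) (convex_Ioo (-r) r)
      (fun w hw => ((hFd w hw).differentiableAt).differentiableWithinAt) _ hys h0s
    intro w hw
    rw [fderivWithin_of_isOpen isOpen_Ioo hw]
    have hfd := hasDerivAt_iff_hasFDerivAt.mp (hFd w hw)
    have h0 : (ContinuousLinearMap.toSpanSingleton ℝ (0:ℝ)) = 0 := by
      ext v; simp
    rw [h0] at hfd
    exact hfd.fderiv
  have hf0 : f 0 = 1 := by
    rw [hf]
    simp only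
    rw [tsum_eq_single 0]
    · simp [hc]
    · intro n hn
      rw [zero_pow hn, mul_zero]
  have hF0 : F 0 = 1 := by
    rw [hF]
    simp only [sub_zero, Real.one_rpow, hf0, mul_one]
  have hFy : (1-y)^a * f y = 1 := by
    have := hconst.trans hF0
    rwa [hF] at this
  have h1y : 0 < 1 - y := by
    rcases abs_lt.mp hy with ⟨_, h2⟩
    linarith
  have hfy : f y = (1-y)^(-a) := by
    rw [Real.rpow_neg h1y.le]
    exact eq_inv_of_mul_eq_one_left (by linarith [hFy])
  have := (summable_binom a hy).hasSum
  rw [show (∑' n, poch a n / (n.factorial : ℝ) * y ^ n) = f y from rfl, hfy] at this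
  exact this

end Binom

lemma pochInnerSum (γ α : ℝ) (hγ : 0 < γ) (j r : ℕ) :
    ∑ m ∈ Finset.range (r+1),
      γ / (γ + m + j) * (poch (γ - α) m * (-1)^m / m.factorial)
        * (poch (γ + m + j) (r - m) / (r - m).factorial)
    = γ / (γ + j + r) * (poch (α + 1 + j) r / r.factorial) := by
  have hkey := keyid (γ - α) (γ + j + 1) r
  have hden : (0:ℝ) < γ + j + r := by positivity
  have e0 : γ + (j:ℝ) + 1 - (γ - α) = α + 1 + j := by ring
  rw [e0] at hkey
  have hterm : ∀ m ∈ Finset.range (r+1),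
      γ / (γ + m + j) * (poch (γ - α) m * (-1)^m / m.factorial)
        * (poch (γ + m + j) (r - m) / (r - m).factorial)
      = γ / ((γ + j + r) * r.factorial) *
        ((-1:ℝ)^m * (r.choose m) * poch (γ - α) m * poch (γ + j + 1 + m) (r - m)) := by
    intro m hm
    rw [Finset.mem_range] at hm
    have hmr : m ≤ r := Nat.lt_succ_iff.mp hm
    have hpma := poch_mul_add (γ + m + j) (r - m)
    have ec1 : γ + (m:ℝ) + j + ((r - m : ℕ):ℝ) = γ + j + r := by
      rw [Nat.cast_sub hmr]; ring
    have ec2 : γ + (m:ℝ) + (j:ℝ) + 1 = γ + j + 1 + m := by ring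
    rw [ec1, ec2] at hpma
    -- hpma : poch (γ+m+j) (r-m) * (γ+j+r) = (γ+m+j) * poch (γ+j+1+m) (r-m)
    have hfac : (r.factorial : ℝ) = (r.choose m) * m.factorial * (r - m).factorial := by
      rw [← Nat.choose_mul_factorial_mul_factorial hmr]
      push_cast
      ring
    have h1 : (0:ℝ) < γ + m + j := by positivity
    have h2 : (0:ℝ) < (m.factorial : ℝ) := by positivity
    have h3 : (0:ℝ) < ((r-m).factorial : ℝ) := by positivity
    have h4 : (0:ℝ) < (r.factorial : ℝ) := by positivity
    have h5 : (0:ℝ) < ((r.choose m : ℕ) : ℝ) := by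
      have := Nat.choose_pos hmr
      exact_mod_cast this
    have hsub : poch (γ + m + j) (r - m) = (γ + m + j) * poch (γ + j + 1 + m) (r - m) / (γ + j + r) := by
      rw [eq_div_iff hden.ne']
      exact hpma
    rw [hfac, hsub]
    field_simp
  rw [Finset.sum_congr rfl hterm, ← Finset.mul_sum, hkey]
  field_simp

lemma laguerre_finite_id (α γ x : ℝ) (hα : -1 < α) (hγ : 0 < γ) (N : ℕ) :
    ∑ p ∈ Finset.range (N+1) ×ˢ Finset.range (N+1),
      (if p.1 + p.2 ≤ N then
        (γ / (γ + p.1 + p.2) * (poch (γ - α) p.1 * (-1)^p.1 / p.1.factorial)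
            * ((-x)^p.2 / p.2.factorial))
          * (poch (γ + p.1 + p.2) (N - p.1 - p.2) / (N - p.1 - p.2).factorial)
        else 0)
    = γ / ((N:ℝ) + γ) * laguerre α x N := by
  have hα1 : (0:ℝ) < α + 1 := by linarith
  rw [Finset.sum_product, Finset.sum_comm, laguerre, Finset.mul_sum]
  apply Finset.sum_congr rfl
  intro j hj
  rw [Finset.mem_range] at hj
  have hjN : j ≤ N := Nat.lt_succ_iff.mp hj
  set r := N - j with hr
  have hjr : j + r = N := by omega
  -- restrict inner sum to range (r+1)
  have hsub : ∑ m ∈ Finset.range (N+1),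
      (if m + j ≤ N then
        (γ / (γ + m + j) * (poch (γ - α) m * (-1)^m / m.factorial)
            * ((-x)^j / j.factorial))
          * (poch (γ + m + j) (N - m - j) / (N - m - j).factorial)
        else 0)
      = ∑ m ∈ Finset.range (r+1),
        ((-x)^j / j.factorial) *
          (γ / (γ + m + j) * (poch (γ - α) m * (-1)^m / m.factorial)
            * (poch (γ + m + j) (r - m) / (r - m).factorial)) := by
    rw [← Finset.sum_subset (Finset.range_subset_range.mpr (by omega : r + 1 ≤ N + 1))]
    · apply Finset.sum_congr rfl
      intro m hm
      rw [Finset.mem_range] at hm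
      have hmr : m ≤ r := Nat.lt_succ_iff.mp hm
      rw [if_pos (by omega : m + j ≤ N)]
      have e : N - m - j = r - m := by omega
      rw [e]
      ring
    · intro m hm hnm
      rw [Finset.mem_range] at hm
      rw [Finset.mem_range] at hnm
      rw [if_neg (by omega)]
  rw [hsub, ← Finset.mul_sum, pochInnerSum γ α hγ j r]
  -- now a pointwise identity
  have hcast : ((r:ℝ)) = (N:ℝ) - j := by
    rw [hr, Nat.cast_sub hjN]
  have hpoch : poch (α + 1) N = poch (α + 1) j * poch (α + 1 + j) r := by
    rw [← hjr, poch_add]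
  have hNfac : (N - j) = r := hr.symm
  rw [hpoch]
  have h1 : (0:ℝ) < poch (α+1) j := poch_pos hα1 j
  have h2 : (0:ℝ) < (j.factorial : ℝ) := by positivity
  have h3 : (0:ℝ) < (r.factorial : ℝ) := by positivity
  have h4 : (0:ℝ) < γ + j + r := by positivity
  have h5 : γ + (j:ℝ) + r = (N:ℝ) + γ := by rw [hcast]; ring
  have h6 : (0:ℝ) < (N:ℝ) + γ := by rw [← h5]; positivity
  rw [neg_pow x j, h5]
  field_simp

/-- Modified generating function of Laguerre polynomials in terms of the Humbert
function \(\Phi_1[\gamma, \gamma-\alpha; \gamma+1; t/(t-1), xt/(t-1)]\). -/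
theorem laguerre_modified_generating_function (α γ x t : ℝ) (hα : -1 < α) (hγ : 0 < γ)
    (ht : |t| < 1 / 2) :
    HasSum (fun n : ℕ => γ / ((n : ℝ) + γ) * laguerre α x n * t ^ n)
      ((1 - t) ^ (-γ) *
        ∑' p : ℕ × ℕ,
          poch γ (p.1 + p.2) * poch (γ - α) p.1 /
            (poch (γ + 1) (p.1 + p.2) * (Nat.factorial p.1) * (Nat.factorial p.2)) *
            (t / (t - 1)) ^ p.1 * (x * t / (t - 1)) ^ p.2) := by
  set R : ℕ × ℕ → ℝ := fun p =>
    poch γ (p.1 + p.2) * poch (γ - α) p.1 /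
      (poch (γ + 1) (p.1 + p.2) * (Nat.factorial p.1) * (Nat.factorial p.2)) *
      (t / (t - 1)) ^ p.1 * (x * t / (t - 1)) ^ p.2 with hRdef
  set q : ℝ := |t| with hqdef
  have hq0 : 0 ≤ q := abs_nonneg t
  have hq2 : q < 1/2 := ht
  have hq1 : q < 1 := by linarith
  have ht1 : |t| < 1 := by rw [← hqdef]; exact hq1
  have htlt : t < 1/2 := (le_abs_self t).trans_lt ht
  have h1t : (0:ℝ) < 1 - t := by linarith
  have h1q : (0:ℝ) < 1 - q := by linarith
  have h1qhalf : (1:ℝ)/2 < 1 - q := by linarith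
  set b1 : ℕ := Nat.ceil |γ - α| with hb1
  set w : ℝ := 2 * q with hwdef
  have hw0 : 0 ≤ w := by positivity
  have hw1 : w < 1 := by rw [hwdef]; linarith
  set A : ℕ → ℕ → ℝ := fun m j =>
    γ / (γ + m + j) * (poch (γ - α) m * (-1)^m / m.factorial) * ((-x)^j / j.factorial) with hAdef
  set D : (ℕ × ℕ) × ℕ → ℝ := fun p =>
    A p.1.1 p.1.2 * (poch (γ + p.1.1 + p.1.2) p.2 / p.2.factorial)
      * t ^ (p.1.1 + p.1.2 + p.2) with hDdef
  have hpos : ∀ (m j : ℕ), (0:ℝ) < γ + m + j := fun m j => by positivity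
  have hAe : ∀ m j : ℕ, |A m j|
      = γ / (γ + m + j) * (|poch (γ - α) m| / m.factorial) * (|x|^j / j.factorial) := by
    intro m j
    rw [hAdef]
    simp only
    rw [abs_mul, abs_mul]
    congr 1
    · congr 1
      · rw [abs_div, abs_of_pos hγ, abs_of_pos (hpos m j)]
      · rw [abs_div, abs_mul, abs_pow, abs_neg, abs_one, one_pow, mul_one, Nat.abs_cast]
    · rw [abs_div, abs_pow, abs_neg, Nat.abs_cast]
  have hAbound : ∀ m j : ℕ, |A m j| ≤ ((m:ℝ)+1)^b1 * (|x|^j / j.factorial) := by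
    intro m j
    rw [hAe m j]
    have h1 : γ / (γ + m + j) ≤ 1 := by
      rw [div_le_one (hpos m j)]
      have : (0:ℝ) ≤ (m:ℝ) := Nat.cast_nonneg m
      have : (0:ℝ) ≤ (j:ℝ) := Nat.cast_nonneg j
      linarith
    have h2 : |poch (γ - α) m| / m.factorial ≤ ((m:ℝ)+1)^b1 := by
      have := abs_poch_div_fact_le (γ - α) m
      rwa [abs_div, Nat.abs_cast] at this
    calc γ / (γ + m + j) * (|poch (γ - α) m| / m.factorial) * (|x|^j / j.factorial)
        ≤ 1 * (((m:ℝ)+1)^b1) * (|x|^j / j.factorial) := by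
          apply mul_le_mul_of_nonneg_right _ (by positivity)
          apply mul_le_mul h1 h2 (by positivity) (by norm_num)
      _ = ((m:ℝ)+1)^b1 * (|x|^j / j.factorial) := by ring
  have hDabs : ∀ (m j n : ℕ), |D ((m,j),n)|
      = |A m j| * (poch (γ + m + j) n / n.factorial) * q^(m+j+n) := by
    intro m j n
    rw [hDdef]
    simp only
    rw [abs_mul, abs_mul, abs_pow, abs_div, Nat.abs_cast,
      abs_of_pos (poch_pos (hpos m j) n), hqdef]
  have habs_fiber : ∀ (m j : ℕ), HasSum (fun n => |D ((m,j),n)|)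
      (|A m j| * q^(m+j) * (1-q) ^ (-(γ+(m:ℝ)+(j:ℝ)))) := by
    intro m j
    have hb := (binom (γ+(m:ℝ)+(j:ℝ)) (y := q)
      (by rw [abs_of_nonneg hq0]; exact hq1)).mul_left (|A m j| * q^(m+j))
    have e : (fun n : ℕ => |A m j| * q^(m+j) * (poch (γ+(m:ℝ)+(j:ℝ)) n / n.factorial * q^n))
        = fun n => |D ((m,j),n)| := by
      funext n
      rw [hDabs m j n, pow_add]
      ring
    rw [e] at hb
    exact hb
  have hDabs_summable : Summable (fun p : (ℕ×ℕ)×ℕ => |D p|) := by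
    apply (summable_prod_of_nonneg (fun p => abs_nonneg _)).mpr
    constructor
    · intro p
      exact (habs_fiber p.1 p.2).summable
    · have ht' : ∀ p : ℕ×ℕ, ∑' n, |D (p,n)|
          = |A p.1 p.2| * q^(p.1+p.2) * (1-q) ^ (-(γ+(p.1:ℝ)+(p.2:ℝ))) :=
        fun p => (habs_fiber p.1 p.2).tsum_eq
      rw [funext ht']
      have hbig : Summable (fun p : ℕ×ℕ =>
          ((1-q) ^ (-γ) : ℝ) * ((((p.1:ℝ)+1)^b1 * w^p.1) * ((|x| * w)^p.2 / p.2.factorial))) := by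
        apply Summable.mul_left
        apply Summable.mul_of_nonneg (summable_poly_geom b1 hw0 hw1)
          (Real.summable_pow_div_factorial (|x| * w))
        · intro n
          positivity
        · intro n
          positivity
      apply Summable.of_nonneg_of_le _ _ hbig
      · intro p
        have := Real.rpow_nonneg h1q.le (-(γ+(p.1:ℝ)+(p.2:ℝ)))
        positivity
      · intro p
        obtain ⟨m, j⟩ := p
        simp only
        have hrb : (1-q) ^ (-(γ+(m:ℝ)+(j:ℝ))) ≤ (1-q) ^ (-γ) * 2^(m+j) := by
          have e1 : (-(γ+(m:ℝ)+(j:ℝ))) = -γ + (-(((m+j:ℕ)):ℝ)) := by push_cast; ring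
          have e2 : ((1-q):ℝ) ^ (-(((m+j:ℕ)):ℝ)) = (((1-q):ℝ)^((m+j:ℕ)))⁻¹ := by
            rw [Real.rpow_neg h1q.le, Real.rpow_natCast]
          rw [e1, Real.rpow_add h1q, e2]
          apply mul_le_mul_of_nonneg_left _ (Real.rpow_nonneg h1q.le _)
          rw [inv_le_comm₀ (pow_pos h1q _) (by positivity)]
          calc ((2:ℝ)^(m+j))⁻¹ = ((1:ℝ)/2)^(m+j) := by
                rw [one_div, inv_pow]
            _ ≤ (1-q)^(m+j) := pow_le_pow_left₀ (by norm_num) h1qhalf.le _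
        calc |A m j| * q^(m+j) * (1-q) ^ (-(γ+(m:ℝ)+(j:ℝ)))
            ≤ (((m:ℝ)+1)^b1 * (|x|^j / j.factorial)) * q^(m+j) * ((1-q) ^ (-γ) * 2^(m+j)) := by
              apply mul_le_mul _ hrb (Real.rpow_nonneg h1q.le _) (by positivity)
              exact mul_le_mul_of_nonneg_right (hAbound m j) (by positivity)
          _ = (1-q) ^ (-γ) * ((((m:ℝ)+1)^b1 * w^m) * ((|x| * w)^j / j.factorial)) := by
              rw [hwdef, mul_pow, mul_pow, pow_add, pow_add]
              ring
  have hDsum : Summable D := hDabs_summable.of_abs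
  set S : ℝ := ∑' p, D p with hSdef
  have hS : HasSum D S := hDsum.hasSum
  -- RHS identification
  have hfib : ∀ p : ℕ×ℕ, HasSum (fun n => D (p,n))
      (A p.1 p.2 * t^(p.1+p.2) * (1-t) ^ (-(γ+(p.1:ℝ)+(p.2:ℝ)))) := by
    intro p
    have hb := (binom (γ+(p.1:ℝ)+(p.2:ℝ)) ht1).mul_left (A p.1 p.2 * t^(p.1+p.2))
    have e : (fun n : ℕ => A p.1 p.2 * t^(p.1+p.2) * (poch (γ+(p.1:ℝ)+(p.2:ℝ)) n / n.factorial * t^n))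
        = fun n => D (p,n) := by
      funext n
      rw [hDdef]
      simp only
      rw [pow_add]
      ring
    rw [e] at hb
    exact hb
  have hG : HasSum (fun p : ℕ×ℕ => A p.1 p.2 * t^(p.1+p.2) * (1-t) ^ (-(γ+(p.1:ℝ)+(p.2:ℝ)))) S :=
    hS.prod_fiberwise hfib
  have htm1 : t - 1 ≠ 0 := by intro h; nlinarith
  have hterm : ∀ p : ℕ×ℕ, A p.1 p.2 * t^(p.1+p.2) * (1-t) ^ (-(γ+(p.1:ℝ)+(p.2:ℝ)))
      = (1-t) ^ (-γ) * R p := by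
    intro p
    obtain ⟨m, j⟩ := p
    rw [hRdef, hAdef]
    simp only
    have hsplit : ((1-t) : ℝ) ^ (-(γ+(m:ℝ)+(j:ℝ)))
        = (1-t) ^ (-γ) * ((1-t)^((m+j:ℕ)))⁻¹ := by
      have e1 : (-(γ+(m:ℝ)+(j:ℝ))) = -γ + (-(((m+j:ℕ)):ℝ)) := by push_cast; ring
      have e2 : ((1-t):ℝ) ^ (-(((m+j:ℕ)):ℝ)) = (((1-t):ℝ)^((m+j:ℕ)))⁻¹ := by
        rw [Real.rpow_neg h1t.le, Real.rpow_natCast]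
      rw [e1, Real.rpow_add h1t, e2]
    rw [hsplit]
    have hpm : poch γ (m+j) = γ * poch (γ+1) (m+j) / (γ + ((m+j:ℕ):ℝ)) := by
      rw [eq_div_iff]
      · exact poch_mul_add γ (m+j)
      · push_cast
        positivity
    rw [hpm]
    have hne1 : ((1-t):ℝ)^((m+j:ℕ)) ≠ 0 := pow_ne_zero _ h1t.ne'
    have hne2 : poch (γ+1) (m+j) ≠ 0 := (poch_pos (by linarith) _).ne'
    have hne3 : (0:ℝ) < γ + ((m+j:ℕ):ℝ) := by push_cast; positivity
    have hne4 : ((m.factorial : ℝ)) ≠ 0 := by positivity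
    have hne5 : ((j.factorial : ℝ)) ≠ 0 := by positivity
    have hrp : ((1-t):ℝ)^(-γ) ≠ 0 := (Real.rpow_pos_of_pos h1t _).ne'
    have het1 : (t - 1) = -(1-t) := by ring
    have hc : ((m+j:ℕ):ℝ) = (m:ℝ) + j := by push_cast; ring
    rw [show (t/(t-1)) = -(t/(1-t)) from by rw [het1, div_neg],
      show (x*t/(t-1)) = -(x*t/(1-t)) from by rw [het1, div_neg],
      neg_pow (t/(1-t)) m, neg_pow (x*t/(1-t)) j, neg_pow x j, hc]
    field_simp
    have hi : ∀ k : ℕ, ((1-t)⁻¹)^k * (1-t)^k = 1 := fun k => by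
      rw [← mul_pow, inv_mul_cancel₀ h1t.ne', one_pow]
    linear_combination (-(γ + (m:ℝ) + j) * poch (γ - α) m * x^j * t^j * t^m) * hi j
      + (-(γ + (m:ℝ) + j) * poch (γ - α) m * x^j * t^j * t^m * ((1-t)⁻¹^j * (1-t)^j)) * hi m
  have hG2 : HasSum (fun p : ℕ×ℕ => (1-t) ^ (-γ) * R p) S := by
    have e := funext hterm
    rwa [e] at hG
  have hk : ((1-t):ℝ) ^ (-γ) ≠ 0 := (Real.rpow_pos_of_pos h1t _).ne'
  have hR : HasSum R ((((1-t):ℝ) ^ (-γ))⁻¹ * S) := by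
    refine (hasSum_mul_left_iff hk).mp ?_
    rwa [← mul_assoc, mul_inv_cancel₀ hk, one_mul]
  rw [hR.tsum_eq, ← mul_assoc, mul_inv_cancel₀ hk, one_mul]
  -- LHS identification
  set E : ℕ × (ℕ × ℕ) → ℝ := fun p =>
    if p.2.1 + p.2.2 ≤ p.1 then
      A p.2.1 p.2.2 * (poch (γ + p.2.1 + p.2.2) (p.1 - p.2.1 - p.2.2)
        / (p.1 - p.2.1 - p.2.2).factorial) * t ^ p.1
    else 0 with hEdef
  set ι : (ℕ×ℕ)×ℕ → ℕ×(ℕ×ℕ) := fun p => (p.1.1 + p.1.2 + p.2, p.1) with hidef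
  have hinj : Function.Injective ι := by
    intro p p' h
    obtain ⟨⟨m,j⟩,n⟩ := p
    obtain ⟨⟨m',j'⟩,n'⟩ := p'
    rw [hidef] at h
    simp only [Prod.mk.injEq] at h
    obtain ⟨h1, h2, h3⟩ := h
    subst h2
    subst h3
    have : n = n' := by omega
    subst this
    rfl
  have hcomp : ∀ p : (ℕ×ℕ)×ℕ, E (ι p) = D p := by
    intro p
    obtain ⟨⟨m,j⟩,n⟩ := p
    rw [hEdef, hidef, hDdef]
    simp only
    rw [if_pos (Nat.le_add_right _ _)]
    have e : m + j + n - m - j = n := by omega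
    rw [e]
  have hvan : ∀ p ∉ Set.range ι, E p = 0 := by
    intro p hp
    obtain ⟨N, m, j⟩ := p
    by_cases hle : m + j ≤ N
    · exfalso
      apply hp
      refine ⟨((m,j), N - m - j), ?_⟩
      rw [hidef]
      simp only
      have e : m + j + (N - m - j) = N := by omega
      rw [e]
    · rw [hEdef]
      exact if_neg hle
  have hE : HasSum E S := by
    rw [← Function.Injective.hasSum_iff hinj hvan]
    have e : E ∘ ι = D := funext hcomp
    rwa [e]
  have hfib2 : ∀ N : ℕ, HasSum (fun p : ℕ×ℕ => E (N, p))
      (∑ p ∈ Finset.range (N+1) ×ˢ Finset.range (N+1), E (N, p)) := by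
    intro N
    apply hasSum_sum_of_ne_finset_zero
    intro p hp
    have hc : ¬(p.1 + p.2 ≤ N) := by
      rw [Finset.mem_product, Finset.mem_range, Finset.mem_range] at hp
      omega
    rw [hEdef]
    exact if_neg hc
  have hLsum : HasSum (fun N : ℕ => ∑ p ∈ Finset.range (N+1) ×ˢ Finset.range (N+1), E (N, p)) S :=
    hE.prod_fiberwise hfib2
  have hfinal : ∀ N : ℕ,
      (∑ p ∈ Finset.range (N+1) ×ˢ Finset.range (N+1), E (N, p))
      = γ / ((N:ℝ) + γ) * laguerre α x N * t^N := by
    intro N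
    have step1 : (∑ p ∈ Finset.range (N+1) ×ˢ Finset.range (N+1), E (N, p))
        = (∑ p ∈ Finset.range (N+1) ×ˢ Finset.range (N+1),
            (if p.1 + p.2 ≤ N then
              (γ / (γ + p.1 + p.2) * (poch (γ - α) p.1 * (-1)^p.1 / p.1.factorial)
                  * ((-x)^p.2 / p.2.factorial))
                * (poch (γ + p.1 + p.2) (N - p.1 - p.2) / (N - p.1 - p.2).factorial)
              else 0)) * t^N := by
      rw [Finset.sum_mul]
      apply Finset.sum_congr rfl
      intro p hp
      rw [hEdef, hAdef]
      simp only
      rw [ite_mul, zero_mul]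
    rw [step1, laguerre_finite_id α γ x hα hγ N]
  have efin := funext hfinal
  rwa [efin] at hLsum
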